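/- Let x = (x_1,…,x_R) be a vector of distinct real numbers, c = (c_1,…,c_R) a vector of real numbers, B = B(x,c), and let u ∈ ℂ^R be an eigenvector of B with eigenvalue iμ, μ ∈ ℝ. Then |Σ_{r=1}^R c_r u_r|² = Σ_{r=1}^R |c_r u_r|². -/

import Mathlib

open Matrix

/-- The generalized weighted Hilbert matrix `B(x,c)` with entries
`b_{m,n} = c_m c_n / (x_m - x_n)` for `m ≠ n` and `0` on the diagonal. -/
noncomputable def Bmat {R : ℕ} (x c : Fin R → ℝ) : Matrix (Fin R) (Fin R) ℝ :=
  Matrix.of fun m n => if m = n then 0 else c m * c n / (x m - x n)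

/-- If `u` is an eigenvector of `B(x,c)` for the eigenvalue `iμ`, then
`|Σ_r c_r u_r|² = Σ_r |c_r u_r|²`. -/
theorem eigenvector_weighted_sum_identity {R : ℕ} (x c : Fin R → ℝ)
    (hx : Function.Injective x) (μ : ℝ) (u : Fin R → ℂ) (hu : u ≠ 0)
    (h : ((Bmat x c).map (fun r => (r : ℂ))) *ᵥ u = (Complex.I * (μ : ℂ)) • u) :
    ‖∑ r, (c r : ℂ) * u r‖ ^ 2 =
      ∑ r, ‖(c r : ℂ) * u r‖ ^ 2 := by
  classical
  set M : Matrix (Fin R) (Fin R) ℂ := (Bmat x c).map (fun r => (r : ℂ)) with hM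
  have hMdef : ∀ m n, M m n = if m = n then 0 else (c m : ℂ) * c n / (x m - x n) := by
    intro m n
    simp only [hM, Matrix.map_apply, Bmat, Matrix.of_apply]
    split <;> push_cast <;> ring
  have hMreal : ∀ m n, (starRingEnd ℂ) (M m n) = M m n := by
    intro m n
    simp [hM, Matrix.map_apply, Complex.conj_ofReal]
  set E : ℂ := Complex.I * (μ : ℂ) with hE
  have heq : ∀ m, ∑ n, M m n * u n = E * u m := by
    intro m
    have := congrFun h m
    simpa [Matrix.mulVec, dotProduct] using this
  have hconj : ∀ m, ∑ n, M m n * (starRingEnd ℂ) (u n) = -E * (starRingEnd ℂ) (u m) := by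
    intro m
    have := congrArg (starRingEnd ℂ) (heq m)
    rw [map_sum] at this
    simp only [_root_.map_mul, hMreal] at this
    rw [this, hE]
    simp [Complex.conj_I]
  have hxne : ∀ m n : Fin R, m ≠ n → (x m : ℂ) - x n ≠ 0 := by
    intro m n hmn hxy
    apply hmn
    apply hx
    have : (x m : ℂ) = x n := by linear_combination hxy
    exact_mod_cast this
  set T : ℂ := ∑ m, (x m : ℂ) * (u m * (starRingEnd ℂ) (u m)) with hT
  have hS1 : ∑ m, ∑ n, (x m : ℂ) * u m * (M m n * (starRingEnd ℂ) (u n)) = -E * T := by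
    rw [hT, Finset.mul_sum]
    refine Finset.sum_congr rfl fun m _ => ?_
    rw [← Finset.mul_sum, hconj m]
    ring
  have hS2 : ∑ n, ∑ m, (x n : ℂ) * (starRingEnd ℂ) (u n) * (M n m * u m) = E * T := by
    rw [hT, Finset.mul_sum]
    refine Finset.sum_congr rfl fun n _ => ?_
    rw [← Finset.mul_sum, heq n]
    ring
  have key : ∑ m, ∑ n, (if m = n then (0:ℂ)
      else (c m : ℂ) * c n * u m * (starRingEnd ℂ) (u n)) = 0 := by
    have split : ∀ m n : Fin R, (if m = n then (0:ℂ)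
        else (c m : ℂ) * c n * u m * (starRingEnd ℂ) (u n))
        = (x m : ℂ) * u m * (M m n * (starRingEnd ℂ) (u n))
          + (x n : ℂ) * (starRingEnd ℂ) (u n) * (M n m * u m) := by
      intro m n
      by_cases hmn : m = n
      · subst hmn
        simp [hMdef]
      · rw [hMdef, hMdef, if_neg hmn, if_neg hmn, if_neg (Ne.symm hmn)]
        have h1 := hxne m n hmn
        have h2 := hxne n m (Ne.symm hmn)
        field_simp
        ring
    calc ∑ m, ∑ n, (if m = n then (0:ℂ)
          else (c m : ℂ) * c n * u m * (starRingEnd ℂ) (u n))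
        = ∑ m, ∑ n, ((x m : ℂ) * u m * (M m n * (starRingEnd ℂ) (u n))
          + (x n : ℂ) * (starRingEnd ℂ) (u n) * (M n m * u m)) := by
          refine Finset.sum_congr rfl fun m _ => Finset.sum_congr rfl fun n _ => split m n
      _ = (∑ m, ∑ n, (x m : ℂ) * u m * (M m n * (starRingEnd ℂ) (u n)))
          + ∑ m, ∑ n, (x n : ℂ) * (starRingEnd ℂ) (u n) * (M n m * u m) := by
          rw [← Finset.sum_add_distrib]
          exact Finset.sum_congr rfl fun m _ => Finset.sum_add_distrib
      _ = -E * T + E * T := by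
          rw [hS1, Finset.sum_comm, hS2]
      _ = 0 := by ring
  have expand : (∑ r, (c r : ℂ) * u r) * (starRingEnd ℂ) (∑ r, (c r : ℂ) * u r)
      = ∑ m, ∑ n, (c m : ℂ) * c n * u m * (starRingEnd ℂ) (u n) := by
    rw [map_sum, Finset.sum_mul_sum]
    refine Finset.sum_congr rfl fun m _ => Finset.sum_congr rfl fun n _ => ?_
    simp only [_root_.map_mul, Complex.conj_ofReal]
    ring
  have diag : ∑ m, ∑ n, (c m : ℂ) * c n * u m * (starRingEnd ℂ) (u n)
      = ∑ r, ((c r : ℂ) * u r) * (starRingEnd ℂ) ((c r : ℂ) * u r) := by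
    have : ∀ m n : Fin R, (c m : ℂ) * c n * u m * (starRingEnd ℂ) (u n)
        = (if m = n then (0:ℂ) else (c m : ℂ) * c n * u m * (starRingEnd ℂ) (u n))
          + (if m = n then (c m : ℂ) * c n * u m * (starRingEnd ℂ) (u n) else 0) := by
      intro m n; split <;> ring
    calc ∑ m, ∑ n, (c m : ℂ) * c n * u m * (starRingEnd ℂ) (u n)
        = (∑ m, ∑ n, (if m = n then (0:ℂ)
            else (c m : ℂ) * c n * u m * (starRingEnd ℂ) (u n)))
          + ∑ m, ∑ n, (if m = n then (c m : ℂ) * c n * u m * (starRingEnd ℂ) (u n) else 0) := by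
          rw [← Finset.sum_add_distrib]
          refine Finset.sum_congr rfl fun m _ => ?_
          rw [← Finset.sum_add_distrib]
          exact Finset.sum_congr rfl fun n _ => this m n
      _ = ∑ m, (c m : ℂ) * c m * u m * (starRingEnd ℂ) (u m) := by
          rw [key, zero_add]
          refine Finset.sum_congr rfl fun m _ => ?_
          simp
      _ = ∑ r, ((c r : ℂ) * u r) * (starRingEnd ℂ) ((c r : ℂ) * u r) := by
          refine Finset.sum_congr rfl fun r _ => ?_
          simp only [_root_.map_mul, Complex.conj_ofReal]
          ring
  have final : (∑ r, (c r : ℂ) * u r) * (starRingEnd ℂ) (∑ r, (c r : ℂ) * u r)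
      = ∑ r, ((c r : ℂ) * u r) * (starRingEnd ℂ) ((c r : ℂ) * u r) := by
    rw [expand, diag]
  simp only [Complex.sq_norm]
  apply Complex.ofReal_injective
  push_cast [← Complex.mul_conj]
  exact final
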